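/- For any three unit vectors d1, d2, d3 in a complex inner product space with pairwise squared overlaps r12 = |⟨d1,d2⟩|², r23 = |⟨d2,d3⟩|², r13 = |⟨d1,d3⟩|², if r12 + r23 > 1 then r13 ≥ (√(r12·r23) − √((1−r12)(1−r23)))². -/

import Mathlib

open scoped InnerProductSpace

theorem overlap_gram_bound
    {H : Type*} [NormedAddCommGroup H] [InnerProductSpace ℂ H]
    (d1 d2 d3 : H) (h1 : ‖d1‖ = 1) (h2 : ‖d2‖ = 1) (h3 : ‖d3‖ = 1)
    (r12 r23 r13 : ℝ)
    (hr12 : r12 = ‖⟪d1, d2⟫_ℂ‖ ^ 2)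
    (hr23 : r23 = ‖⟪d2, d3⟫_ℂ‖ ^ 2)
    (hr13 : r13 = ‖⟪d1, d3⟫_ℂ‖ ^ 2)
    (hgt : r12 + r23 > 1) :
    r13 ≥ (Real.sqrt (r12 * r23) - Real.sqrt ((1 - r12) * (1 - r23))) ^ 2 := by
  set c1 : ℂ := ⟪d2, d1⟫_ℂ with hc1
  set c3 : ℂ := ⟪d2, d3⟫_ℂ with hc3
  set x := d1 - c1 • d2 with hx
  set y := d3 - c3 • d2 with hy
  have hd2self : ⟪d2, d2⟫_ℂ = 1 := by
    rw [inner_self_eq_norm_sq_to_K, h2]; norm_num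
  have hxd2 : ⟪d2, x⟫_ℂ = 0 := by
    simp [hx, inner_sub_right, inner_smul_right, hd2self, h2, hc1]
  have hyd2 : ⟪d2, y⟫_ℂ = 0 := by
    simp [hy, inner_sub_right, inner_smul_right, hd2self, h2, hc3]
  have hd2x : ⟪x, d2⟫_ℂ = 0 := by
    rw [← inner_conj_symm, hxd2, map_zero]
  -- norms
  have hc1n : ‖c1‖ ^ 2 = r12 := by
    rw [hr12, hc1, ← inner_conj_symm d2 d1, RCLike.norm_conj]
  have hc3n : ‖c3‖ ^ 2 = r23 := by rw [hr23]
  have hd1c1 : ⟪d1, c1 • d2⟫_ℂ = (‖c1‖ : ℂ) ^ 2 := by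
    rw [inner_smul_right, ← inner_conj_symm d1 d2, ← hc1, Complex.mul_conj']
  have hd3c3 : ⟪d3, c3 • d2⟫_ℂ = (‖c3‖ : ℂ) ^ 2 := by
    rw [inner_smul_right, ← inner_conj_symm d3 d2, ← hc3, Complex.mul_conj']
  have hxn : ‖x‖ ^ 2 = 1 - r12 := by
    rw [hx, norm_sub_sq (𝕜 := ℂ), h1, hd1c1, norm_smul, h2]
    have hre : RCLike.re ((‖c1‖ : ℂ) ^ 2) = ‖c1‖ ^ 2 := by norm_cast
    rw [hre]
    linarith [hc1n]
  have hyn : ‖y‖ ^ 2 = 1 - r23 := by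
    rw [hy, norm_sub_sq (𝕜 := ℂ), h3, hd3c3, norm_smul, h2]
    have hre : RCLike.re ((‖c3‖ : ℂ) ^ 2) = ‖c3‖ ^ 2 := by norm_cast
    rw [hre]
    linarith [hc3n]
  -- decomposition
  have hdec : ⟪d1, d3⟫_ℂ = (starRingEnd ℂ) c1 * c3 + ⟪x, y⟫_ℂ := by
    have hd1 : d1 = c1 • d2 + x := by simp [hx]
    have hd3 : d3 = c3 • d2 + y := by simp [hy]
    conv_lhs => rw [hd1, hd3]
    simp only [inner_add_left, inner_add_right, inner_smul_left,
      inner_smul_right, hd2self, hyd2, hd2x]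
    ring
  -- nonnegativity facts
  have h12le : r12 ≤ 1 := by
    rw [hr12]
    calc ‖⟪d1, d2⟫_ℂ‖ ^ 2 ≤ (‖d1‖ * ‖d2‖) ^ 2 := by
          apply pow_le_pow_left₀ (norm_nonneg _) (norm_inner_le_norm d1 d2)
      _ = 1 := by rw [h1, h2]; norm_num
  have h23le : r23 ≤ 1 := by
    rw [hr23]
    calc ‖⟪d2, d3⟫_ℂ‖ ^ 2 ≤ (‖d2‖ * ‖d3‖) ^ 2 := by
          apply pow_le_pow_left₀ (norm_nonneg _) (norm_inner_le_norm d2 d3)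
      _ = 1 := by rw [h2, h3]; norm_num
  have h12nn : 0 ≤ r12 := by rw [hr12]; positivity
  have h23nn : 0 ≤ r23 := by rw [hr23]; positivity
  set s := Real.sqrt (r12 * r23) with hs
  set t := Real.sqrt ((1 - r12) * (1 - r23)) with ht
  have hts : t ≤ s := by
    apply Real.sqrt_le_sqrt
    nlinarith
  -- norm bounds
  have hnx : ‖x‖ = Real.sqrt (1 - r12) := by
    rw [← hxn, Real.sqrt_sq (norm_nonneg _)]
  have hny : ‖y‖ = Real.sqrt (1 - r23) := by
    rw [← hyn, Real.sqrt_sq (norm_nonneg _)]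
  have hxyt : ‖⟪x, y⟫_ℂ‖ ≤ t := by
    calc ‖⟪x, y⟫_ℂ‖ ≤ ‖x‖ * ‖y‖ := norm_inner_le_norm x y
      _ = t := by
          rw [hnx, hny, ht, ← Real.sqrt_mul (by linarith)]
  have hc1c3 : ‖(starRingEnd ℂ) c1 * c3‖ = s := by
    rw [norm_mul, RCLike.norm_conj, hs]
    rw [← hc1n, ← hc3n, Real.sqrt_mul (by positivity),
      Real.sqrt_sq (norm_nonneg _), Real.sqrt_sq (norm_nonneg _)]
  -- main inequality
  have hmain : s - t ≤ ‖⟪d1, d3⟫_ℂ‖ := by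
    have h := norm_sub_norm_le ((starRingEnd ℂ) c1 * c3) (-⟪x, y⟫_ℂ)
    rw [sub_neg_eq_add, ← hdec, norm_neg, hc1c3] at h
    linarith
  rw [hr13, ge_iff_le]
  exact pow_le_pow_left₀ (by linarith) hmain 2
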